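/- Let V be a real inner product space, z ∈ V with ⟨z,z⟩ > 0, p ∈ [0,1], and let X₀, …, Xₙ ∈ V be pairwise p-uncorrelated with respect to z with var_p(Xₖ; z) > 0 for each k. Then for any Y ∈ V and any real constants α₀, …, αₙ: var_p(Y - Σₖ (cov_p(Xₖ,Y;z)/var_p(Xₖ;z))·Xₖ ; z) ≤ var_p(Y - Σₖ αₖ·Xₖ ; z). -/
import Mathlib


open RealInnerProductSpace

/-- The p-covariance of `x` and `y` with respect to the fixed element `z`. -/
noncomputable def pCov {V : Type*} [NormedAddCommGroup V] [InnerProductSpace ℝ V]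
    (p : ℝ) (z x y : V) : ℝ :=
  ⟪x, y⟫ - p * ⟪x, z⟫ * ⟪y, z⟫ / ⟪z, z⟫

/-- The p-variance of `x` with respect to the fixed element `z`. -/
noncomputable def pVar {V : Type*} [NormedAddCommGroup V] [InnerProductSpace ℝ V]
    (p : ℝ) (z x : V) : ℝ :=
  pCov p z x x

section aux

variable {V : Type*} [NormedAddCommGroup V] [InnerProductSpace ℝ V]

lemma pCov_symm (p : ℝ) (z x y : V) : pCov p z x y = pCov p z y x := by
  simp only [pCov]; rw [real_inner_comm x y]; ring

lemma pCov_add_right (p : ℝ) (z x y w : V) :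
    pCov p z x (y + w) = pCov p z x y + pCov p z x w := by
  simp only [pCov, inner_add_right, inner_add_left]; ring

lemma pCov_sub_right (p : ℝ) (z x y w : V) :
    pCov p z x (y - w) = pCov p z x y - pCov p z x w := by
  simp only [pCov, inner_sub_right, inner_sub_left]; ring

lemma pCov_smul_right (p : ℝ) (z x y : V) (c : ℝ) :
    pCov p z x (c • y) = c * pCov p z x y := by
  simp only [pCov, real_inner_smul_right, real_inner_smul_left]; ring

lemma pCov_zero_right (p : ℝ) (z x : V) : pCov p z x 0 = 0 := by
  simp [pCov]

lemma pCov_sum_right (p : ℝ) (z x : V) {ι : Type*} (s : Finset ι) (f : ι → V) :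
    pCov p z x (∑ i ∈ s, f i) = ∑ i ∈ s, pCov p z x (f i) := by
  induction s using Finset.cons_induction with
  | empty => simp [pCov_zero_right]
  | cons a s ha ih => rw [Finset.sum_cons, Finset.sum_cons, pCov_add_right, ih]

lemma pVar_nonneg {p : ℝ} {z : V} (hz : (0:ℝ) < ⟪z, z⟫) (hp0 : 0 ≤ p) (hp1 : p ≤ 1)
    (x : V) : 0 ≤ pVar p z x := by
  rw [pVar, pCov, sub_nonneg, div_le_iff₀ hz]
  nlinarith [mul_self_nonneg (⟪x, z⟫ : ℝ), real_inner_mul_inner_self_le x z,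
    real_inner_self_nonneg (x := x)]

lemma pVar_add (p : ℝ) (z a b : V) :
    pVar p z (a + b) = pVar p z a + 2 * pCov p z a b + pVar p z b := by
  rw [pVar, pCov_add_right, pCov_symm p z (a + b) a, pCov_symm p z (a + b) b,
    pCov_add_right, pCov_add_right, pVar, pVar, pCov_symm p z b a]
  ring

end aux

theorem pVar_best_approximation
    {V : Type*} [NormedAddCommGroup V] [InnerProductSpace ℝ V]
    (z : V) (hz : (0:ℝ) < ⟪z, z⟫)
    (p : ℝ) (hp0 : 0 ≤ p) (hp1 : p ≤ 1)
    (n : ℕ) (X : Fin (n + 1) → V)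
    (huncorr : ∀ i j, i ≠ j → pCov p z (X i) (X j) = 0)
    (hvar : ∀ k, 0 < pVar p z (X k))
    (Y : V) (α : Fin (n + 1) → ℝ) :
    pVar p z (Y - ∑ k, (pCov p z (X k) Y / pVar p z (X k)) • X k)
      ≤ pVar p z (Y - ∑ k, α k • X k) := by
  set c : Fin (n + 1) → ℝ := fun k => pCov p z (X k) Y / pVar p z (X k) with hc
  set E : V := Y - ∑ k, c k • X k with hE
  set D : V := ∑ k, (c k - α k) • X k with hD
  have hsplit : Y - ∑ k, α k • X k = E + D := by
    simp only [hE, hD, sub_smul, Finset.sum_sub_distrib]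
    abel
  have hEXk : ∀ k, pCov p z E (X k) = 0 := by
    intro k
    rw [pCov_symm, hE, pCov_sub_right, pCov_sum_right]
    have : ∑ j, pCov p z (X k) (c j • X j) = c k * pVar p z (X k) := by
      rw [Finset.sum_eq_single k]
      · rw [pCov_smul_right, pVar]
      · intro j _ hj
        rw [pCov_smul_right, huncorr k j (Ne.symm hj), mul_zero]
      · simp
    rw [this, hc, div_mul_cancel₀ _ (hvar k).ne', sub_self]
  have hED : pCov p z E D = 0 := by
    rw [hD, pCov_sum_right]
    apply Finset.sum_eq_zero
    intro k _
    rw [pCov_smul_right, hEXk k, mul_zero]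
  rw [hsplit, pVar_add, hED]
  have := pVar_nonneg hz hp0 hp1 D
  linarith [pVar_nonneg hz hp0 hp1 D]
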